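/- Let n ≥ 2, let π be a permutation of [n], let 0 < μ ≤ 1, and let φ_1, φ_2 ∈ [0,1) be scaling parameters with |φ_1 − φ_2| ≤ μ²/(10n³). Then d_TV(M(φ_1, π), M(φ_2, π)) ≤ μ. -/

import Mathlib

open Finset

/-- Number of inversions of a permutation of `Fin n`. -/
def numInv {n : ℕ} (τ : Equiv.Perm (Fin n)) : ℕ :=
  (Finset.univ.filter fun p : Fin n × Fin n => p.1 < p.2 ∧ τ p.2 < τ p.1).card

/-- Kendall-Tau distance between two permutations of `Fin n`. -/
def dKT {n : ℕ} (π π' : Equiv.Perm (Fin n)) : ℕ :=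
  (Finset.univ.filter fun p : Fin n × Fin n =>
    p.1 < p.2 ∧ ¬((π p.1 < π p.2) ↔ (π' p.1 < π' p.2))).card

/-- The Mallows model probability of `σ`, with scaling parameter `φ` and center `c`. -/
noncomputable def mallows {n : ℕ} (φ : ℝ) (c : Equiv.Perm (Fin n)) (σ : Equiv.Perm (Fin n)) : ℝ :=
  φ ^ dKT c σ / ∑ τ : Equiv.Perm (Fin n), φ ^ dKT c τ

/-- Total variation distance. -/
noncomputable def dTV {n : ℕ} (P Q : Equiv.Perm (Fin n) → ℝ) : ℝ :=
  (∑ σ : Equiv.Perm (Fin n), |P σ - Q σ|) / 2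

def invSet {n : ℕ} (τ : Equiv.Perm (Fin n)) : Finset (Fin n × Fin n) :=
  Finset.univ.filter fun p : Fin n × Fin n => p.1 < p.2 ∧ τ p.2 < τ p.1

lemma numInv_eq {n : ℕ} (τ : Equiv.Perm (Fin n)) : numInv τ = (invSet τ).card := rfl

lemma swap_step {n : ℕ} (a b : Fin n) (τ : Equiv.Perm (Fin n)) (hab : a < b)
    (hinv : τ b < τ a) : numInv (τ * Equiv.swap a b) + 1 ≤ numInv τ := by
  classical
  set s := Equiv.swap a b with hs
  have hmem : (a, b) ∈ invSet τ := by simp [invSet, hab, hinv]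
  have hsa : s a = b := Equiv.swap_apply_left a b
  have hsb : s b = a := Equiv.swap_apply_right a b
  have hsx : ∀ x : Fin n, x ≠ a → x ≠ b → s x = x := fun x h1 h2 =>
    Equiv.swap_apply_of_ne_of_ne h1 h2
  have hcard : (invSet (τ * s)).card ≤ ((invSet τ).erase (a, b)).card := by
    apply Finset.card_le_card_of_injOn
      (fun p => if s p.1 < s p.2 then (s p.1, s p.2) else p)
    · rintro ⟨p, q⟩ hpq
      simp only [invSet, Finset.mem_coe, Finset.mem_filter, Finset.mem_univ, true_and] at hpq
      obtain ⟨hlt, hiv⟩ := hpq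
      have hiv' : τ (s q) < τ (s p) := by
        simpa [Equiv.Perm.mul_apply] using hiv
      simp only [Finset.mem_coe]
      by_cases hss : s p < s q
      · rw [if_pos hss]
        refine Finset.mem_erase.mpr ⟨?_, ?_⟩
        · intro h
          rw [Prod.mk.injEq] at h
          have hp : p = b := s.injective (h.1.trans hsb.symm)
          have hq : q = a := s.injective (h.2.trans hsa.symm)
          rw [hp, hq] at hlt
          exact absurd hab (not_lt.mpr hlt.le)
        · simp only [invSet, Finset.mem_filter, Finset.mem_univ, true_and]
          exact ⟨hss, hiv'⟩
      · rw [if_neg hss]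
        have hqp : s q < s p :=
          lt_of_le_of_ne (not_lt.mp hss) (fun e => hlt.ne' (s.injective e))
        by_cases hpa : p = a
        · by_cases hqb : q = b
          · rw [hpa, hqb, hsa, hsb] at hiv'
            exact absurd hiv' (not_lt.mpr hinv.le)
          · have hqa : q ≠ a := (hpa ▸ hlt).ne'
            have hsq : s q = q := hsx q hqa hqb
            rw [hpa, hsa, hsq] at hiv'
            refine Finset.mem_erase.mpr ⟨?_, ?_⟩
            · intro h
              rw [Prod.mk.injEq] at h
              exact hqb h.2
            · simp only [invSet, Finset.mem_filter, Finset.mem_univ, true_and]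
              refine ⟨hlt, ?_⟩
              rw [hpa]
              exact hiv'.trans hinv
        · by_cases hqb : q = b
          · have hpb : p ≠ b := (hqb ▸ hlt).ne
            have hsp : s p = p := hsx p hpa hpb
            rw [hqb, hsb, hsp] at hiv'
            refine Finset.mem_erase.mpr ⟨?_, ?_⟩
            · intro h
              rw [Prod.mk.injEq] at h
              exact hpa h.1
            · simp only [invSet, Finset.mem_filter, Finset.mem_univ, true_and]
              refine ⟨hlt, ?_⟩
              rw [hqb]
              exact hinv.trans hiv'
          · by_cases hpb : p = b
            · have hblt : b < q := hpb ▸ hlt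
              have hq1 : q ≠ a := fun e => absurd hab (not_lt.mpr ((e ▸ hblt).le))
              have hsq : s q = q := hsx q hq1 hqb
              rw [hpb, hsb, hsq] at hqp
              exact absurd hqp (not_lt.mpr (hab.trans hblt).le)
            · by_cases hqa : q = a
              · have hlta : p < a := hqa ▸ hlt
                have hsp : s p = p := hsx p hpa hpb
                rw [hqa, hsa, hsp] at hqp
                exact absurd hqp (not_lt.mpr (hlta.trans hab).le)
              · rw [hsx p hpa hpb, hsx q hqa hqb] at hqp
                exact absurd hqp (not_lt.mpr hlt.le)
    · rintro ⟨p1, q1⟩ h1 ⟨p2, q2⟩ h2 heq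
      simp only [Finset.mem_coe, invSet, Finset.mem_filter, Finset.mem_univ, true_and] at h1 h2
      obtain ⟨hlt1, -⟩ := h1
      obtain ⟨hlt2, -⟩ := h2
      dsimp only at heq
      by_cases c1 : s p1 < s q1 <;> by_cases c2 : s p2 < s q2
      · rw [if_pos c1, if_pos c2, Prod.mk.injEq] at heq
        rw [Prod.mk.injEq]
        exact ⟨s.injective heq.1, s.injective heq.2⟩
      · rw [if_pos c1, if_neg c2, Prod.mk.injEq] at heq
        exfalso
        apply c2
        rw [← heq.1, ← heq.2, hs, Equiv.swap_apply_self, Equiv.swap_apply_self]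
        exact hlt1
      · rw [if_neg c1, if_pos c2, Prod.mk.injEq] at heq
        exfalso
        apply c1
        rw [heq.1, heq.2, hs, Equiv.swap_apply_self, Equiv.swap_apply_self]
        exact hlt2
      · rw [if_neg c1, if_neg c2] at heq
        exact heq
  have hpos : 1 ≤ (invSet τ).card := Finset.card_pos.mpr ⟨_, hmem⟩
  have herase : ((invSet τ).erase (a, b)).card = (invSet τ).card - 1 :=
    Finset.card_erase_of_mem hmem
  rw [numInv_eq, numInv_eq]
  omega

lemma perm_inv_apply_self' {n : ℕ} (f : Equiv.Perm (Fin n)) (x : Fin n) : f⁻¹ (f x) = x := by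
  simp

lemma perm_apply_inv_self' {n : ℕ} (f : Equiv.Perm (Fin n)) (x : Fin n) : f (f⁻¹ x) = x := by
  simp

lemma dKT_eq_numInv {n : ℕ} (π σ : Equiv.Perm (Fin n)) : dKT π σ = numInv (σ * π⁻¹) := by
  classical
  rw [dKT, numInv]
  apply Finset.card_nbij'
    (i := fun p : Fin n × Fin n => if π p.1 < π p.2 then (π p.1, π p.2) else (π p.2, π p.1))
    (j := fun q : Fin n × Fin n => if π⁻¹ q.1 < π⁻¹ q.2 then (π⁻¹ q.1, π⁻¹ q.2)
      else (π⁻¹ q.2, π⁻¹ q.1))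
  · rintro ⟨i0, j0⟩ hp
    simp only [Finset.mem_coe, Finset.mem_filter, Finset.mem_univ, true_and] at hp ⊢
    obtain ⟨hlt, hdis⟩ := hp
    have hπne : π i0 ≠ π j0 := fun e => hlt.ne (π.injective e)
    have hσne : σ i0 ≠ σ j0 := fun e => hlt.ne (σ.injective e)
    by_cases h : π i0 < π j0
    · rw [if_pos h]
      refine ⟨h, ?_⟩
      simp only [Equiv.Perm.mul_apply, perm_inv_apply_self']
      have : ¬(σ i0 < σ j0) := fun hσ => hdis (iff_of_true h hσ)
      exact lt_of_le_of_ne (not_lt.mp this) hσne.symm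
    · rw [if_neg h]
      have h' : π j0 < π i0 := lt_of_le_of_ne (not_lt.mp h) hπne.symm
      refine ⟨h', ?_⟩
      simp only [Equiv.Perm.mul_apply, perm_inv_apply_self']
      by_contra hσ
      exact hdis (iff_of_false h (fun hc => hσ hc))
  · rintro ⟨aa, bb⟩ hq
    simp only [Finset.mem_coe, Finset.mem_filter, Finset.mem_univ, true_and] at hq ⊢
    simp only [Equiv.Perm.mul_apply] at hq ⊢
    obtain ⟨hlt, hiv⟩ := hq
    have hne : π⁻¹ aa ≠ π⁻¹ bb := fun e => hlt.ne (π⁻¹.injective e)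
    by_cases h : π⁻¹ aa < π⁻¹ bb
    · rw [if_pos h]
      refine ⟨h, ?_⟩
      simp only [perm_apply_inv_self']
      intro hiff
      exact absurd hiv (not_lt.mpr (hiff.mp hlt).le)
    · rw [if_neg h]
      have h' : π⁻¹ bb < π⁻¹ aa := lt_of_le_of_ne (not_lt.mp h) hne.symm
      refine ⟨h', ?_⟩
      simp only [perm_apply_inv_self']
      intro hiff
      exact absurd (hiff.mpr hiv) (not_lt.mpr hlt.le)
  · rintro ⟨i0, j0⟩ hp
    simp only [Finset.mem_coe, Finset.mem_filter, Finset.mem_univ, true_and] at hp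
    obtain ⟨hlt, -⟩ := hp
    dsimp only
    by_cases h : π i0 < π j0
    · rw [if_pos h]
      simp only [perm_inv_apply_self']
      rw [if_pos hlt]
    · rw [if_neg h]
      simp only [perm_inv_apply_self']
      rw [if_neg (not_lt.mpr hlt.le)]
  · rintro ⟨aa, bb⟩ hq
    simp only [Finset.mem_coe, Finset.mem_filter, Finset.mem_univ, true_and] at hq
    obtain ⟨hlt, -⟩ := hq
    dsimp only
    by_cases h : π⁻¹ aa < π⁻¹ bb
    · rw [if_pos h]
      simp only [perm_apply_inv_self']
      rw [if_pos hlt]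
    · rw [if_neg h]
      simp only [perm_apply_inv_self']
      rw [if_neg (not_lt.mpr hlt.le)]

lemma sum_key {n : ℕ} (φ : ℝ) (h0 : 0 ≤ φ) (h1 : φ ≤ 1) :
    ∑ τ : Equiv.Perm (Fin n), (numInv τ : ℝ) * φ ^ (numInv τ - 1)
      ≤ (n : ℝ) ^ 2 * ∑ τ : Equiv.Perm (Fin n), φ ^ numInv τ := by
  classical
  have hZ0 : (0 : ℝ) ≤ ∑ τ : Equiv.Perm (Fin n), φ ^ numInv τ :=
    Finset.sum_nonneg fun τ _ => pow_nonneg h0 _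
  have expand : ∀ τ : Equiv.Perm (Fin n), (numInv τ : ℝ) * φ ^ (numInv τ - 1)
      = ∑ p : Fin n × Fin n, if p ∈ invSet τ then φ ^ (numInv τ - 1) else 0 := by
    intro τ
    rw [Finset.sum_ite_mem, Finset.univ_inter, Finset.sum_const, nsmul_eq_mul, numInv_eq]
  calc ∑ τ : Equiv.Perm (Fin n), (numInv τ : ℝ) * φ ^ (numInv τ - 1)
      = ∑ τ : Equiv.Perm (Fin n), ∑ p : Fin n × Fin n,
          (if p ∈ invSet τ then φ ^ (numInv τ - 1) else 0) :=
        Finset.sum_congr rfl fun τ _ => expand τ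
    _ = ∑ p : Fin n × Fin n, ∑ τ : Equiv.Perm (Fin n),
          (if p ∈ invSet τ then φ ^ (numInv τ - 1) else 0) := Finset.sum_comm
    _ ≤ ∑ _p : Fin n × Fin n, ∑ τ : Equiv.Perm (Fin n), φ ^ numInv τ := by
        apply Finset.sum_le_sum
        rintro ⟨a, b⟩ -
        by_cases hab : a < b
        · rw [← Finset.sum_filter]
          set F := Finset.univ.filter (fun τ : Equiv.Perm (Fin n) => (a, b) ∈ invSet τ) with hF
          have step : ∀ τ ∈ F, φ ^ (numInv τ - 1) ≤ φ ^ numInv (τ * Equiv.swap a b) := by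
            intro τ hτ
            rw [hF, Finset.mem_filter] at hτ
            have hmem := hτ.2
            simp only [invSet, Finset.mem_filter, Finset.mem_univ, true_and] at hmem
            have hstep := swap_step a b τ hab hmem.2
            exact pow_le_pow_of_le_one h0 h1 (by omega)
          calc ∑ τ ∈ F, φ ^ (numInv τ - 1)
              ≤ ∑ τ ∈ F, φ ^ numInv (τ * Equiv.swap a b) := Finset.sum_le_sum step
            _ = ∑ τ' ∈ F.image (· * Equiv.swap a b), φ ^ numInv τ' := by
                rw [Finset.sum_image]
                intro x _ y _ h
                exact mul_right_cancel h
            _ ≤ ∑ τ' : Equiv.Perm (Fin n), φ ^ numInv τ' :=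
                Finset.sum_le_sum_of_subset_of_nonneg (Finset.subset_univ _)
                  (fun τ' _ _ => pow_nonneg h0 _)
        · have hz : ∀ τ : Equiv.Perm (Fin n),
              (if (a, b) ∈ invSet τ then φ ^ (numInv τ - 1) else 0) = 0 := by
            intro τ
            rw [if_neg]
            simp [invSet, hab]
          simp only [hz, Finset.sum_const, smul_zero]
          exact hZ0
    _ = ((Finset.univ : Finset (Fin n × Fin n)).card : ℝ)
          * ∑ τ : Equiv.Perm (Fin n), φ ^ numInv τ := by
        rw [Finset.sum_const, nsmul_eq_mul]
    _ = (n : ℝ) ^ 2 * ∑ τ : Equiv.Perm (Fin n), φ ^ numInv τ := by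
        rw [Finset.card_univ, Fintype.card_prod, Fintype.card_fin]
        push_cast
        ring

lemma geom_step (x y : ℝ) (hy : 0 ≤ y) (hxy : y ≤ x) (hx : x ≤ 1) (k : ℕ) :
    x ^ k - y ^ k ≤ (k : ℝ) * (x - y) * x ^ (k - 1) := by
  have hx0 : 0 ≤ x := le_trans hy hxy
  rw [← geom_sum₂_mul x y k]
  have hb : ∀ i ∈ Finset.range k, x ^ i * y ^ (k - 1 - i) ≤ x ^ (k - 1) := by
    intro i hi
    rw [Finset.mem_range] at hi
    calc x ^ i * y ^ (k - 1 - i) ≤ x ^ i * x ^ (k - 1 - i) :=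
          mul_le_mul_of_nonneg_left (pow_le_pow_left₀ hy hxy _) (pow_nonneg hx0 _)
      _ = x ^ (k - 1) := by rw [← pow_add]; congr 1; omega
  calc (∑ i ∈ Finset.range k, x ^ i * y ^ (k - 1 - i)) * (x - y)
      ≤ ((k : ℝ) * x ^ (k - 1)) * (x - y) := by
        apply mul_le_mul_of_nonneg_right _ (sub_nonneg.mpr hxy)
        calc (∑ i ∈ Finset.range k, x ^ i * y ^ (k - 1 - i))
            ≤ ∑ _i ∈ Finset.range k, x ^ (k - 1) := Finset.sum_le_sum hb
          _ = (k : ℝ) * x ^ (k - 1) := by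
              simp [Finset.sum_const, nsmul_eq_mul]
    _ = (k : ℝ) * (x - y) * x ^ (k - 1) := by ring

lemma main_aux (n : ℕ) (hn : 2 ≤ n) (π : Equiv.Perm (Fin n))
    (μ φ₁ φ₂ : ℝ) (hμ0 : 0 < μ) (hμ1 : μ ≤ 1)
    (hφ₁ : φ₁ < 1) (hφ₂0 : 0 ≤ φ₂) (hle : φ₂ ≤ φ₁)
    (hd : φ₁ - φ₂ ≤ μ ^ 2 / (10 * (n : ℝ) ^ 3)) :
    dTV (mallows φ₁ π) (mallows φ₂ π) ≤ μ := by
  have hn' : (2 : ℝ) ≤ (n : ℝ) := by exact_mod_cast hn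
  have hnpos : (0 : ℝ) < (n : ℝ) := by linarith
  have hφ₁0 : 0 ≤ φ₁ := le_trans hφ₂0 hle
  set A := ∑ τ : Equiv.Perm (Fin n), φ₁ ^ dKT π τ with hA
  set B := ∑ τ : Equiv.Perm (Fin n), φ₂ ^ dKT π τ with hB
  have hdself : dKT π π = 0 := by simp [dKT]
  have hA1 : (1 : ℝ) ≤ A := by
    have := Finset.single_le_sum (f := fun σ : Equiv.Perm (Fin n) => φ₁ ^ dKT π σ)
      (fun i _ => pow_nonneg hφ₁0 _) (Finset.mem_univ π)
    simpa [hdself, ← hA] using this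
  have hB1 : (1 : ℝ) ≤ B := by
    have := Finset.single_le_sum (f := fun σ : Equiv.Perm (Fin n) => φ₂ ^ dKT π σ)
      (fun i _ => pow_nonneg hφ₂0 _) (Finset.mem_univ π)
    simpa [hdself, ← hB] using this
  have hBA : B ≤ A := Finset.sum_le_sum fun i _ => pow_le_pow_left₀ hφ₂0 hle _
  have hA0 : (0 : ℝ) < A := lt_of_lt_of_le one_pos hA1
  have hB0 : (0 : ℝ) < B := lt_of_lt_of_le one_pos hB1
  -- pointwise bound
  have hpt : ∀ σ : Equiv.Perm (Fin n), |mallows φ₁ π σ - mallows φ₂ π σ|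
      ≤ (φ₁ ^ dKT π σ - φ₂ ^ dKT π σ) / A + φ₂ ^ dKT π σ * ((A - B) / (A * B)) := by
    intro σ
    have hab : φ₂ ^ dKT π σ ≤ φ₁ ^ dKT π σ := pow_le_pow_left₀ hφ₂0 hle _
    have hb0 : (0 : ℝ) ≤ φ₂ ^ dKT π σ := pow_nonneg hφ₂0 _
    have heq : mallows φ₁ π σ - mallows φ₂ π σ
        = (φ₁ ^ dKT π σ - φ₂ ^ dKT π σ) / A + φ₂ ^ dKT π σ * ((B - A) / (A * B)) := by
      unfold mallows
      rw [← hA, ← hB]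
      field_simp
      ring
    rw [heq]
    calc |(φ₁ ^ dKT π σ - φ₂ ^ dKT π σ) / A + φ₂ ^ dKT π σ * ((B - A) / (A * B))|
        ≤ |(φ₁ ^ dKT π σ - φ₂ ^ dKT π σ) / A| + |φ₂ ^ dKT π σ * ((B - A) / (A * B))| :=
          abs_add_le _ _
      _ = (φ₁ ^ dKT π σ - φ₂ ^ dKT π σ) / A + φ₂ ^ dKT π σ * ((A - B) / (A * B)) := by
          rw [abs_of_nonneg (div_nonneg (sub_nonneg.mpr hab) hA0.le), abs_mul,
            abs_of_nonneg hb0, abs_div, abs_of_nonneg (mul_pos hA0 hB0).le,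
            abs_sub_comm, abs_of_nonneg (sub_nonneg.mpr hBA)]
  have hsum : ∑ σ : Equiv.Perm (Fin n), |mallows φ₁ π σ - mallows φ₂ π σ|
      ≤ 2 * ((A - B) / A) := by
    calc ∑ σ : Equiv.Perm (Fin n), |mallows φ₁ π σ - mallows φ₂ π σ|
        ≤ ∑ σ : Equiv.Perm (Fin n),
            ((φ₁ ^ dKT π σ - φ₂ ^ dKT π σ) / A + φ₂ ^ dKT π σ * ((A - B) / (A * B))) :=
          Finset.sum_le_sum fun σ _ => hpt σ
      _ = (A - B) / A + B * ((A - B) / (A * B)) := by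
          rw [Finset.sum_add_distrib, ← Finset.sum_div, ← Finset.sum_mul,
            Finset.sum_sub_distrib, ← hA, ← hB]
      _ = 2 * ((A - B) / A) := by
          field_simp
          ring
  have hTV : dTV (mallows φ₁ π) (mallows φ₂ π) ≤ (A - B) / A := by
    unfold dTV
    linarith [hsum]
  -- bound A - B
  have hAB2 : A - B ≤ (φ₁ - φ₂) * ((n : ℝ) ^ 2 * A) := by
    have step1 : A - B ≤ (φ₁ - φ₂) *
        ∑ σ : Equiv.Perm (Fin n), (dKT π σ : ℝ) * φ₁ ^ (dKT π σ - 1) := by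
      rw [hA, hB, ← Finset.sum_sub_distrib, Finset.mul_sum]
      apply Finset.sum_le_sum
      intro σ _
      calc φ₁ ^ dKT π σ - φ₂ ^ dKT π σ
          ≤ (dKT π σ : ℝ) * (φ₁ - φ₂) * φ₁ ^ (dKT π σ - 1) :=
            geom_step φ₁ φ₂ hφ₂0 hle hφ₁.le (dKT π σ)
        _ = (φ₁ - φ₂) * ((dKT π σ : ℝ) * φ₁ ^ (dKT π σ - 1)) := by ring
    have reindex1 : ∑ σ : Equiv.Perm (Fin n), (dKT π σ : ℝ) * φ₁ ^ (dKT π σ - 1)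
        = ∑ τ : Equiv.Perm (Fin n), (numInv τ : ℝ) * φ₁ ^ (numInv τ - 1) :=
      Fintype.sum_equiv (Equiv.mulRight π⁻¹) _ _ (fun σ => by rw [dKT_eq_numInv π σ]; rfl)
    have reindex2 : A = ∑ τ : Equiv.Perm (Fin n), φ₁ ^ numInv τ := by
      rw [hA]
      exact Fintype.sum_equiv (Equiv.mulRight π⁻¹) _ _ (fun σ => by rw [dKT_eq_numInv π σ]; rfl)
    have hkey := sum_key (n := n) φ₁ hφ₁0 hφ₁.le
    have hδ : 0 ≤ φ₁ - φ₂ := sub_nonneg.mpr hle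
    calc A - B ≤ (φ₁ - φ₂) * ∑ σ : Equiv.Perm (Fin n), (dKT π σ : ℝ) * φ₁ ^ (dKT π σ - 1) :=
          step1
      _ = (φ₁ - φ₂) * ∑ τ : Equiv.Perm (Fin n), (numInv τ : ℝ) * φ₁ ^ (numInv τ - 1) := by
          rw [reindex1]
      _ ≤ (φ₁ - φ₂) * ((n : ℝ) ^ 2 * ∑ τ : Equiv.Perm (Fin n), φ₁ ^ numInv τ) :=
          mul_le_mul_of_nonneg_left hkey hδ
      _ = (φ₁ - φ₂) * ((n : ℝ) ^ 2 * A) := by rw [← reindex2]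
  have hfinal1 : (A - B) / A ≤ (φ₁ - φ₂) * (n : ℝ) ^ 2 := by
    rw [div_le_iff₀ hA0]
    nlinarith [hAB2]
  have hfinal2 : (φ₁ - φ₂) * (n : ℝ) ^ 2 ≤ μ ^ 2 / (10 * (n : ℝ) ^ 3) * (n : ℝ) ^ 2 :=
    mul_le_mul_of_nonneg_right hd (by positivity)
  have hfinal3 : μ ^ 2 / (10 * (n : ℝ) ^ 3) * (n : ℝ) ^ 2 ≤ μ := by
    rw [div_mul_eq_mul_div, div_le_iff₀ (by positivity : (0:ℝ) < 10 * (n:ℝ)^3)]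
    have h1 : μ ^ 2 ≤ μ := by nlinarith
    have e1 : μ ^ 2 * (n : ℝ) ^ 2 ≤ μ * (n : ℝ) ^ 2 :=
      mul_le_mul_of_nonneg_right h1 (by positivity)
    have e2 : μ * (n : ℝ) ^ 2 ≤ μ * (10 * (n : ℝ) ^ 3) :=
      mul_le_mul_of_nonneg_left (by nlinarith) hμ0.le
    linarith
  linarith [hTV, hfinal1, hfinal2, hfinal3]

/-- **Lemma 3.6 of Liu–Moitra.** Two Mallows models on `n ≥ 2` elements with the same
base permutation and scaling parameters `φ₁, φ₂ ∈ [0,1)` with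
`|φ₁ - φ₂| ≤ μ²/(10n³)` are within total variation distance `μ`. -/
theorem tv_upper_bound_same_center (n : ℕ) (hn : 2 ≤ n) (π : Equiv.Perm (Fin n))
    (μ φ₁ φ₂ : ℝ) (hμ0 : 0 < μ) (hμ1 : μ ≤ 1)
    (hφ₁0 : 0 ≤ φ₁) (hφ₁ : φ₁ < 1) (hφ₂0 : 0 ≤ φ₂) (hφ₂ : φ₂ < 1)
    (hd : |φ₁ - φ₂| ≤ μ ^ 2 / (10 * (n : ℝ) ^ 3)) :
    dTV (mallows φ₁ π) (mallows φ₂ π) ≤ μ := by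
  have hsymm : dTV (mallows φ₁ π) (mallows φ₂ π) = dTV (mallows φ₂ π) (mallows φ₁ π) := by
    unfold dTV
    congr 1
    exact Finset.sum_congr rfl fun σ _ => abs_sub_comm _ _
  rcases le_total φ₂ φ₁ with h | h
  · exact main_aux n hn π μ φ₁ φ₂ hμ0 hμ1 hφ₁ hφ₂0 h
      (by rwa [abs_of_nonneg (sub_nonneg.mpr h)] at hd)
  · rw [hsymm]
    exact main_aux n hn π μ φ₂ φ₁ hμ0 hμ1 hφ₂ hφ₁0 h
      (by rwa [abs_sub_comm, abs_of_nonneg (sub_nonneg.mpr h)] at hd)
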